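/- Let X be an n-dimensional Banach space and let (x_j, x_j^*)_{j=1}^N be pairs in X × X* with x_j^*(x_j) = 1 for all j. Define the frame operator S : X → X by Sx = Σ_{j=1}^N x_j^*(x) x_j. Then the 2-summing norm of S satisfies π₂(S) ≥ N/√n. -/

import Mathlib

open scoped BigOperators

/-- The 2-summing norm of a continuous linear operator between real normed spaces. -/
noncomputable def pi2 {X Y : Type*} [NormedAddCommGroup X] [NormedSpace ℝ X]
    [NormedAddCommGroup Y] [NormedSpace ℝ Y] (T : X →L[ℝ] Y) : ℝ :=
  sSup { r : ℝ | ∃ (m : ℕ) (x : Fin m → X),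
    (∀ f : X →L[ℝ] ℝ, ∑ i, (f (x i)) ^ 2 ≤ ‖f‖ ^ 2) ∧
    r = Real.sqrt (∑ i, ‖T (x i)‖ ^ 2) }

section Aux

variable {X : Type*} [NormedAddCommGroup X] [NormedSpace ℝ X]

private lemma quad_le {A C : ℝ} (hA : 0 ≤ A) (hC : 0 ≤ C) (h : A ^ 2 ≤ C * A) : A ≤ C := by
  rcases eq_or_lt_of_le hA with h0 | h0
  · simpa [← h0] using hC
  · nlinarith

private lemma psd_cs {M : Type*} [AddCommGroup M] [Module ℝ M] (B : M →ₗ[ℝ] M →ₗ[ℝ] ℝ)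
    (hsymm : ∀ x y, B x y = B y x) (hpsd : ∀ x, 0 ≤ B x x) (x y : M) :
    (B x y) ^ 2 ≤ B x x * B y y := by
  have key : ∀ t : ℝ, 0 ≤ B y y * (t * t) + (2 * B x y) * t + B x x := by
    intro t
    have h0 := hpsd (x + t • y)
    have e1 : B (x + t • y) (x + t • y)
        = B y y * (t * t) + (2 * B x y) * t + B x x := by
      simp [map_add, map_smul, smul_eq_mul, hsymm y x]
      ring
    rw [e1] at h0
    exact h0
  have h := discrim_le_zero key
  simp only [discrim] at h
  nlinarith

/-- evaluation quadratic function on the dual sphere -/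
private noncomputable def evalQ (x y : X) :
    C((Metric.sphere (0 : X →L[ℝ] ℝ) 1 : Set (X →L[ℝ] ℝ)), ℝ) :=
  ⟨fun g => (g : X →L[ℝ] ℝ) x * (g : X →L[ℝ] ℝ) y,
   (((ContinuousLinearMap.apply ℝ ℝ x).continuous).comp continuous_subtype_val).mul
   (((ContinuousLinearMap.apply ℝ ℝ y).continuous).comp continuous_subtype_val)⟩

@[simp] private lemma evalQ_apply (x y : X) (g) :
    evalQ x y g = (g : X →L[ℝ] ℝ) x * (g : X →L[ℝ] ℝ) y := rfl

private noncomputable def PsiMap (S : X →L[ℝ] X) (c : ℝ) {m : ℕ} (y : Fin m → X) :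
    C((Metric.sphere (0 : X →L[ℝ] ℝ) 1 : Set (X →L[ℝ] ℝ)), ℝ) :=
  ⟨fun g => ∑ i, (c * ((g : X →L[ℝ] ℝ) (y i)) ^ 2 - ‖S (y i)‖ ^ 2),
   continuous_finset_sum _ fun i _ =>
     ((continuous_const.mul
       ((((ContinuousLinearMap.apply ℝ ℝ (y i)).continuous).comp continuous_subtype_val).pow 2)).sub
       continuous_const)⟩

@[simp] private lemma PsiMap_apply (S : X →L[ℝ] X) (c : ℝ) {m : ℕ} (y : Fin m → X) (g) :
    PsiMap S c y g = ∑ i, (c * ((g : X →L[ℝ] ℝ) (y i)) ^ 2 - ‖S (y i)‖ ^ 2) := rfl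

private lemma PsiMap_smul (S : X →L[ℝ] X) (c : ℝ) {m : ℕ} (y : Fin m → X) {a : ℝ} (ha : 0 ≤ a) :
    a • PsiMap S c y = PsiMap S c (fun i => Real.sqrt a • y i) := by
  ext g
  simp only [ContinuousMap.smul_apply, PsiMap_apply, smul_eq_mul, Finset.mul_sum]
  refine Finset.sum_congr rfl fun i _ => ?_
  have h1 : (g : X →L[ℝ] ℝ) (Real.sqrt a • y i) = Real.sqrt a * (g : X →L[ℝ] ℝ) (y i) := by
    simp
  have h2 : ‖S (Real.sqrt a • y i)‖ = Real.sqrt a * ‖S (y i)‖ := by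
    rw [map_smul, norm_smul, Real.norm_eq_abs, abs_of_nonneg (Real.sqrt_nonneg a)]
  rw [h1, h2, mul_pow, mul_pow, Real.sq_sqrt ha]
  ring

private lemma PsiMap_add (S : X →L[ℝ] X) (c : ℝ) {m₁ m₂ : ℕ} (y₁ : Fin m₁ → X)
    (y₂ : Fin m₂ → X) :
    PsiMap S c y₁ + PsiMap S c y₂ = PsiMap S c (Fin.append y₁ y₂) := by
  ext g
  simp only [ContinuousMap.add_apply, PsiMap_apply]
  rw [Fin.sum_univ_add]
  congr 1 <;> refine Finset.sum_congr rfl fun i _ => ?_ <;> simp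

end Aux
section Bdd

variable {X : Type*} [NormedAddCommGroup X] [NormedSpace ℝ X] [FiniteDimensional ℝ X]

private lemma pi2Set_bddAbove (S : X →L[ℝ] X) :
    BddAbove { r : ℝ | ∃ (m : ℕ) (x : Fin m → X),
      (∀ f : X →L[ℝ] ℝ, ∑ i, (f (x i)) ^ 2 ≤ ‖f‖ ^ 2) ∧
      r = Real.sqrt (∑ i, ‖S (x i)‖ ^ 2) } := by
  classical
  set b := Module.finBasis ℝ X with hb
  set ck : Fin (Module.finrank ℝ X) → (X →L[ℝ] ℝ) :=
    fun k => LinearMap.toContinuousLinearMap (b.coord k) with hck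
  set Bc : ℝ := ∑ k, ‖b k‖ ^ 2 with hBc
  have hBc0 : 0 ≤ Bc := Finset.sum_nonneg fun k _ => sq_nonneg _
  have h2 : ∀ z : X, ‖z‖ ^ 2 ≤ Bc * ∑ k, (ck k z) ^ 2 := by
    intro z
    have hx : ‖z‖ ≤ ∑ k, |b.repr z k| * ‖b k‖ := by
      calc ‖z‖ = ‖∑ k, b.repr z k • b k‖ := by rw [b.sum_repr]
        _ ≤ ∑ k, ‖b.repr z k • b k‖ := norm_sum_le _ _
        _ = ∑ k, |b.repr z k| * ‖b k‖ := by
            refine Finset.sum_congr rfl fun k _ => ?_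
            rw [norm_smul, Real.norm_eq_abs]
    have hcs := Finset.sum_mul_sq_le_sq_mul_sq Finset.univ
      (fun k => |b.repr z k|) (fun k => ‖b k‖)
    have h1 : ‖z‖ ^ 2 ≤ (∑ k, |b.repr z k| * ‖b k‖) ^ 2 :=
      pow_le_pow_left₀ (norm_nonneg z) hx 2
    have hck2 : ∀ k, (ck k z) ^ 2 = |b.repr z k| ^ 2 := by
      intro k
      have : ck k z = b.repr z k := rfl
      rw [this, sq_abs]
    calc ‖z‖ ^ 2 ≤ (∑ k, |b.repr z k| ^ 2) * ∑ k, ‖b k‖ ^ 2 := le_trans h1 hcs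
      _ = Bc * ∑ k, (ck k z) ^ 2 := by
          rw [mul_comm]
          congr 1
          exact Finset.sum_congr rfl fun k _ => (hck2 k).symm
  refine ⟨Real.sqrt (‖S‖ ^ 2 * (Bc * ∑ k, ‖ck k‖ ^ 2)), ?_⟩
  rintro r ⟨m, y, hy, rfl⟩
  apply Real.sqrt_le_sqrt
  have step1 : ∑ i, ‖S (y i)‖ ^ 2 ≤ ‖S‖ ^ 2 * ∑ i, ‖y i‖ ^ 2 := by
    rw [Finset.mul_sum]
    refine Finset.sum_le_sum fun i _ => ?_
    have := S.le_opNorm (y i)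
    nlinarith [norm_nonneg (y i), norm_nonneg (S (y i)), norm_nonneg S]
  have step2 : ∑ i, ‖y i‖ ^ 2 ≤ Bc * ∑ k, ‖ck k‖ ^ 2 := by
    calc ∑ i, ‖y i‖ ^ 2 ≤ ∑ i, (Bc * ∑ k, (ck k (y i)) ^ 2) :=
          Finset.sum_le_sum fun i _ => h2 (y i)
      _ = Bc * ∑ k, ∑ i, (ck k (y i)) ^ 2 := by
          rw [← Finset.mul_sum, Finset.sum_comm]
      _ ≤ Bc * ∑ k, ‖ck k‖ ^ 2 := by
          refine mul_le_mul_of_nonneg_left ?_ hBc0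
          exact Finset.sum_le_sum fun k _ => hy (ck k)
  calc ∑ i, ‖S (y i)‖ ^ 2 ≤ ‖S‖ ^ 2 * ∑ i, ‖y i‖ ^ 2 := step1
    _ ≤ ‖S‖ ^ 2 * (Bc * ∑ k, ‖ck k‖ ^ 2) :=
        mul_le_mul_of_nonneg_left step2 (sq_nonneg _)

end Bdd
set_option maxHeartbeats 2000000 in
theorem frame_potential_lower_bound
    {X : Type*} [NormedAddCommGroup X] [NormedSpace ℝ X] [FiniteDimensional ℝ X]
    (n N : ℕ) (hn : Module.finrank ℝ X = n)
    (x : Fin N → X) (f : Fin N → X →L[ℝ] ℝ)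
    (hpair : ∀ j, f j (x j) = 1)
    (S : X →L[ℝ] X) (hS : ∀ v, S v = ∑ j, f j v • x j) :
    (N : ℝ) / Real.sqrt n ≤ pi2 S := by
  classical
  subst hn
  set Sset : Set ℝ := { r : ℝ | ∃ (m : ℕ) (y : Fin m → X),
    (∀ g : X →L[ℝ] ℝ, ∑ i, (g (y i)) ^ 2 ≤ ‖g‖ ^ 2) ∧
    r = Real.sqrt (∑ i, ‖S (y i)‖ ^ 2) } with hSset
  have hpi2 : pi2 S = sSup Sset := rfl
  have hbdd : BddAbove Sset := pi2Set_bddAbove S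
  have h0mem : (0 : ℝ) ∈ Sset := by
    refine ⟨0, (fun i => i.elim0), fun g => by simp [sq_nonneg], by simp⟩
  have ht0 : 0 ≤ pi2 S := by rw [hpi2]; exact le_csSup hbdd h0mem
  set t := pi2 S with hts
  set c := t ^ 2 with hcs2
  have hc0 : 0 ≤ c := sq_nonneg t
  have factA : ∀ (m : ℕ) (y : Fin m → X),
      (∀ g : X →L[ℝ] ℝ, ∑ i, (g (y i)) ^ 2 ≤ ‖g‖ ^ 2) →
      ∑ i, ‖S (y i)‖ ^ 2 ≤ c := by
    intro m y hy
    have hmem : Real.sqrt (∑ i, ‖S (y i)‖ ^ 2) ∈ Sset := ⟨m, y, hy, rfl⟩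
    have hle : Real.sqrt (∑ i, ‖S (y i)‖ ^ 2) ≤ t := le_csSup hbdd hmem
    have hnn : 0 ≤ ∑ i, ‖S (y i)‖ ^ 2 := Finset.sum_nonneg fun i _ => sq_nonneg _
    calc ∑ i, ‖S (y i)‖ ^ 2 = (Real.sqrt (∑ i, ‖S (y i)‖ ^ 2)) ^ 2 := (Real.sq_sqrt hnn).symm
      _ ≤ t ^ 2 := pow_le_pow_left₀ (Real.sqrt_nonneg _) hle 2
  rcases Nat.eq_zero_or_pos (Module.finrank ℝ X) with hn0 | hnpos
  · haveI : Subsingleton X := Module.finrank_zero_iff.mp hn0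
    cases N with
    | zero => simpa using ht0
    | succ k =>
        exfalso
        have h1 := hpair 0
        rw [Subsingleton.elim (x 0) 0] at h1
        simp at h1
  -- main case
  have hnR : (0:ℝ) < (Module.finrank ℝ X : ℝ) := by exact_mod_cast hnpos
  haveI : Nontrivial X := Module.nontrivial_of_finrank_pos hnpos
  haveI hKcs : CompactSpace (Metric.sphere (0 : X →L[ℝ] ℝ) 1 : Set (X →L[ℝ] ℝ)) := by
    rw [← isCompact_iff_compactSpace]
    exact isCompact_sphere 0 1
  haveI hKne : Nonempty (Metric.sphere (0 : X →L[ℝ] ℝ) 1 : Set (X →L[ℝ] ℝ)) := by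
    obtain ⟨x₀, hx₀⟩ := exists_ne (0 : X)
    obtain ⟨g₀, hg₀, -⟩ := exists_dual_vector ℝ x₀ (norm_ne_zero_iff.mpr hx₀)
    exact ⟨⟨g₀, mem_sphere_zero_iff_norm.mpr hg₀⟩⟩
  have hKnorm : ∀ g : (Metric.sphere (0 : X →L[ℝ] ℝ) 1 : Set (X →L[ℝ] ℝ)),
      ‖(g : X →L[ℝ] ℝ)‖ = 1 := fun g => mem_sphere_zero_iff_norm.mp g.2
  set D : Set C((Metric.sphere (0 : X →L[ℝ] ℝ) 1 : Set (X →L[ℝ] ℝ)), ℝ) :=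
    {ψ | ∃ (m : ℕ) (y : Fin m → X), ψ = PsiMap S c y} with hD
  set Nneg : Set C((Metric.sphere (0 : X →L[ℝ] ℝ) 1 : Set (X →L[ℝ] ℝ)), ℝ) :=
    {ψ | ∀ g, ψ g < 0} with hNg
  have hDconv : Convex ℝ D := by
    rintro ψ₁ ⟨m₁, y₁, rfl⟩ ψ₂ ⟨m₂, y₂, rfl⟩ a b ha hb hab
    refine ⟨m₁ + m₂, Fin.append (fun i => Real.sqrt a • y₁ i) (fun i => Real.sqrt b • y₂ i), ?_⟩
    rw [← PsiMap_add, ← PsiMap_smul S c y₁ ha, ← PsiMap_smul S c y₂ hb]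
  have hNconv : Convex ℝ Nneg := by
    rintro ψ₁ h₁ ψ₂ h₂ a b ha hb hab g
    have v₁ : ψ₁ g < 0 := h₁ g
    have v₂ : ψ₂ g < 0 := h₂ g
    simp only [ContinuousMap.add_apply, ContinuousMap.smul_apply, smul_eq_mul]
    rcases eq_or_lt_of_le ha with h | h
    · have hb1 : b = 1 := by linarith
      rw [← h, hb1]; simpa using v₂
    · have h1 : a * ψ₁ g < 0 := mul_neg_of_pos_of_neg h v₁
      have h2 : b * ψ₂ g ≤ 0 := mul_nonpos_iff.mpr (Or.inl ⟨hb, v₂.le⟩)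
      linarith
  have hNopen : IsOpen Nneg := by
    rw [Metric.isOpen_iff]
    intro ψ hψ
    obtain ⟨g₀, -, hg₀⟩ := isCompact_univ.exists_isMaxOn Set.univ_nonempty
      (map_continuous ψ).continuousOn
    have hg0 : ψ g₀ < 0 := hψ g₀
    refine ⟨-(ψ g₀), by linarith, ?_⟩
    intro ψ' hd' g
    have h1 : ψ' g - ψ g ≤ |ψ' g - ψ g| := le_abs_self _
    have h2 : |ψ' g - ψ g| ≤ ‖ψ' - ψ‖ := by
      have h3 := ContinuousMap.norm_coe_le_norm (ψ' - ψ) g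
      simpa [Real.norm_eq_abs] using h3
    have h3 : ‖ψ' - ψ‖ < -(ψ g₀) := by rwa [Metric.mem_ball, dist_eq_norm] at hd'
    have h4 : ψ g ≤ ψ g₀ := hg₀ (Set.mem_univ g)
    linarith
  have hdisj : Disjoint Nneg D := by
    rw [Set.disjoint_left]
    rintro ψ hψN ⟨m, y, rfl⟩
    have contG : Continuous fun g : (Metric.sphere (0 : X →L[ℝ] ℝ) 1 : Set (X →L[ℝ] ℝ)) =>
        ∑ i, ((g : X →L[ℝ] ℝ) (y i))^2 :=
      continuous_finset_sum _ fun i _ =>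
        ((((ContinuousLinearMap.apply ℝ ℝ (y i)).continuous).comp continuous_subtype_val).pow 2)
    obtain ⟨g₀, -, hg₀⟩ := isCompact_univ.exists_isMaxOn Set.univ_nonempty contG.continuousOn
    set σ := ∑ i, ((g₀ : X →L[ℝ] ℝ) (y i))^2 with hσ
    have hσ0 : 0 ≤ σ := Finset.sum_nonneg fun i _ => sq_nonneg _
    have hmax : ∀ g : (Metric.sphere (0 : X →L[ℝ] ℝ) 1 : Set (X →L[ℝ] ℝ)),
        ∑ i, ((g : X →L[ℝ] ℝ) (y i))^2 ≤ σ := fun g => hg₀ (Set.mem_univ g)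
    have key : ∑ i, ‖S (y i)‖^2 ≤ c * σ := by
      rcases eq_or_lt_of_le hσ0 with hσz | hσpos
      · have hy0 : ∀ i, y i = 0 := by
          intro i
          by_contra hne
          obtain ⟨g, hg1, hgv⟩ := exists_dual_vector ℝ (y i) (norm_ne_zero_iff.mpr hne)
          have hgK : g ∈ Metric.sphere (0 : X →L[ℝ] ℝ) 1 := mem_sphere_zero_iff_norm.mpr hg1
          have h5 : ∑ j, (g (y j))^2 ≤ σ := hmax ⟨g, hgK⟩
          have h6 : (g (y i))^2 ≤ σ :=
            le_trans (Finset.single_le_sum (f := fun j => (g (y j))^2) (fun j _ => sq_nonneg _) (Finset.mem_univ i)) h5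
          rw [← hσz] at h6
          rw [hgv] at h6
          have h8 : 0 < ‖y i‖ := norm_pos_iff.mpr hne
          norm_num at h6
          exact hne h6
        have h9 : ∀ i ∈ Finset.univ, ‖S (y i)‖^2 = 0 := fun i _ => by rw [hy0 i]; simp
        rw [Finset.sum_congr rfl h9]
        simpa using mul_nonneg hc0 hσ0
      · set z : Fin m → X := fun i => (Real.sqrt σ)⁻¹ • y i with hz
        have hadm : ∀ fℓ : X →L[ℝ] ℝ, ∑ i, (fℓ (z i))^2 ≤ ‖fℓ‖^2 := by
          intro fℓ
          rcases eq_or_ne fℓ 0 with rfl | hf0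
          · simp
          · have hnf : 0 < ‖fℓ‖ := norm_pos_iff.mpr hf0
            have hfK : (‖fℓ‖⁻¹ • fℓ) ∈ Metric.sphere (0 : X →L[ℝ] ℝ) 1 := by
              rw [mem_sphere_zero_iff_norm]
              have hns := norm_smul (‖fℓ‖⁻¹) fℓ
              rw [hns, norm_inv, norm_norm]
              field_simp
            have h5 : ∑ i, ((‖fℓ‖⁻¹ • fℓ) (y i))^2 ≤ σ := hmax ⟨_, hfK⟩
            have h5' : (‖fℓ‖^2)⁻¹ * ∑ i, (fℓ (y i))^2 ≤ σ := by
              rw [Finset.mul_sum]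
              refine le_trans (le_of_eq (Finset.sum_congr rfl fun i _ => ?_)) h5
              have hap : (‖fℓ‖⁻¹ • fℓ) (y i) = ‖fℓ‖⁻¹ * fℓ (y i) := rfl
              rw [hap, mul_pow, inv_pow]
            have h6 : ∑ i, (fℓ (y i))^2 ≤ σ * ‖fℓ‖^2 := by
              have h61 := mul_le_mul_of_nonneg_left h5' (sq_nonneg ‖fℓ‖)
              have h62 : ‖fℓ‖^2 * ((‖fℓ‖^2)⁻¹ * ∑ i, (fℓ (y i))^2) = ∑ i, (fℓ (y i))^2 := by
                field_simp
              rw [h62] at h61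
              exact h61.trans_eq (mul_comm _ _)
            have h7 : ∀ i, (fℓ (z i))^2 = σ⁻¹ * (fℓ (y i))^2 := by
              intro i
              rw [hz]
              simp only [map_smul, smul_eq_mul, mul_pow]
              congr 1
              rw [inv_pow, Real.sq_sqrt hσ0]
            rw [Finset.sum_congr rfl fun i _ => h7 i, ← Finset.mul_sum]
            calc σ⁻¹ * ∑ i, (fℓ (y i))^2 ≤ σ⁻¹ * (σ * ‖fℓ‖^2) :=
                  mul_le_mul_of_nonneg_left h6 (inv_nonneg.mpr hσ0)
              _ = ‖fℓ‖^2 := by field_simp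
        have hA := factA m z hadm
        have h8 : ∀ i ∈ Finset.univ, ‖S (z i)‖^2 = σ⁻¹ * ‖S (y i)‖^2 := by
          intro i _
          rw [hz]
          simp only [map_smul, norm_smul, Real.norm_eq_abs, mul_pow, abs_of_nonneg
            (inv_nonneg.mpr (Real.sqrt_nonneg σ))]
          congr 1
          rw [inv_pow, Real.sq_sqrt hσ0]
        rw [Finset.sum_congr rfl h8, ← Finset.mul_sum] at hA
        calc ∑ i, ‖S (y i)‖^2 = σ * (σ⁻¹ * ∑ i, ‖S (y i)‖^2) := by field_simp
          _ ≤ σ * c := mul_le_mul_of_nonneg_left hA hσ0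
          _ = c * σ := mul_comm _ _
    have hval := hψN g₀
    rw [PsiMap_apply] at hval
    have hval2 : ∑ i, (c * ((g₀ : X →L[ℝ] ℝ) (y i))^2 - ‖S (y i)‖^2)
        = c * σ - ∑ i, ‖S (y i)‖^2 := by
      rw [Finset.sum_sub_distrib, ← Finset.mul_sum]
    rw [hval2] at hval
    linarith
  obtain ⟨φ, u, hNsep, hDsep⟩ := geometric_hahn_banach_open hNconv hNopen hDconv hdisj
  have h0D : (0 : C((Metric.sphere (0 : X →L[ℝ] ℝ) 1 : Set (X →L[ℝ] ℝ)), ℝ)) ∈ D := by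
    refine ⟨0, (fun i => i.elim0), ?_⟩
    ext g; simp
  have hu0 : u ≤ 0 := by simpa using hDsep 0 h0D
  have hφ1 : 0 < φ 1 := by
    have hmem : (-1 : C((Metric.sphere (0 : X →L[ℝ] ℝ) 1 : Set (X →L[ℝ] ℝ)), ℝ)) ∈ Nneg := by
      intro g; simp
    have h5 := hNsep _ hmem
    rw [map_neg] at h5
    linarith
  have hpos : ∀ ψ : C((Metric.sphere (0 : X →L[ℝ] ℝ) 1 : Set (X →L[ℝ] ℝ)), ℝ),
      (∀ g, 0 ≤ ψ g) → 0 ≤ φ ψ := by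
    intro ψ hψ
    by_contra hneg
    push_neg at hneg
    set ε := -(φ ψ) / (2 * φ 1) with hε
    have hε0 : 0 < ε := div_pos (by linarith) (by linarith)
    have hmem : (-ψ - ε • 1 : C((Metric.sphere (0 : X →L[ℝ] ℝ) 1 : Set (X →L[ℝ] ℝ)), ℝ)) ∈ Nneg := by
      intro g
      have := hψ g
      simp only [ContinuousMap.sub_apply, ContinuousMap.neg_apply, ContinuousMap.smul_apply,
        ContinuousMap.one_apply, smul_eq_mul, mul_one]
      linarith
    have h9 := hNsep _ hmem
    rw [map_sub, map_neg, map_smul, smul_eq_mul] at h9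
    have hεφ : ε * φ 1 = -(φ ψ) / 2 := by
      rw [hε]; field_simp
    rw [hεφ] at h9
    linarith
  -- the rank-one elements of D give the domination inequality
  have honeΨ : ∀ v : X, 0 ≤ φ (PsiMap S c (fun _ : Fin 1 => v)) := by
    intro v
    by_contra hneg
    push_neg at hneg
    set τ := (u - 1) / φ (PsiMap S c (fun _ : Fin 1 => v)) with hτ
    have hτ0 : 0 < τ := div_pos_of_neg_of_neg (by linarith) hneg
    have hmem : PsiMap S c (fun _ : Fin 1 => Real.sqrt τ • v) ∈ D := ⟨1, _, rfl⟩
    have h9 := hDsep _ hmem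
    rw [show (fun _ : Fin 1 => Real.sqrt τ • v) = (fun i : Fin 1 => Real.sqrt τ • (fun _ : Fin 1 => v) i) from rfl,
      ← PsiMap_smul S c (fun _ : Fin 1 => v) hτ0.le, map_smul, smul_eq_mul] at h9
    rw [hτ, div_mul_cancel₀ _ (ne_of_lt hneg)] at h9
    linarith
  have hone : ∀ v : X, ‖S v‖^2 * φ 1 ≤ c * φ (evalQ v v) := by
    intro v
    have hexp : PsiMap S c (fun _ : Fin 1 => v) = c • evalQ v v - ‖S v‖^2 • 1 := by
      ext g
      simp only [PsiMap_apply, Fin.sum_univ_one, ContinuousMap.sub_apply,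
        ContinuousMap.smul_apply, evalQ_apply, ContinuousMap.one_apply, smul_eq_mul, mul_one]
      ring
    have h9 := honeΨ v
    rw [hexp, map_sub, map_smul, map_smul, smul_eq_mul, smul_eq_mul] at h9
    linarith
  -- the bilinear form
  have hQadd1 : ∀ (v₁ v₂ w : X), evalQ (v₁ + v₂) w = evalQ v₁ w + evalQ v₂ w := by
    intro v₁ v₂ w; ext g
    simp only [evalQ_apply, map_add, ContinuousMap.add_apply]
    ring
  have hQsmul1 : ∀ (a : ℝ) (v w : X), evalQ (a • v) w = a • evalQ v w := by
    intro a v w; ext g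
    simp only [evalQ_apply, map_smul, ContinuousMap.smul_apply, smul_eq_mul]
    ring
  have hQadd2 : ∀ (v w₁ w₂ : X), evalQ v (w₁ + w₂) = evalQ v w₁ + evalQ v w₂ := by
    intro v w₁ w₂; ext g
    simp only [evalQ_apply, map_add, ContinuousMap.add_apply]
    ring
  have hQsmul2 : ∀ (a : ℝ) (v w : X), evalQ v (a • w) = a • evalQ v w := by
    intro a v w; ext g
    simp only [evalQ_apply, map_smul, ContinuousMap.smul_apply, smul_eq_mul]
    ring
  have hQcomm : ∀ v w : X, evalQ v w = evalQ w v := by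
    intro v w; ext g
    simp only [evalQ_apply]
    ring
  set B : X →ₗ[ℝ] X →ₗ[ℝ] ℝ := LinearMap.mk₂ ℝ (fun v w => φ (evalQ v w))
    (fun v₁ v₂ w => by rw [hQadd1, map_add])
    (fun a v w => by rw [hQsmul1, map_smul])
    (fun v w₁ w₂ => by rw [hQadd2, map_add])
    (fun a v w => by rw [hQsmul2, map_smul]) with hB
  have hBapply : ∀ v w : X, B v w = φ (evalQ v w) := fun v w => rfl
  have hBsymm' : ∀ v w : X, B v w = B w v := fun v w => by
    rw [hBapply, hBapply, hQcomm]
  have hBpsd : ∀ v : X, 0 ≤ B v v := by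
    intro v
    rw [hBapply]
    exact hpos _ (fun g => by rw [evalQ_apply]; exact mul_self_nonneg _)
  have hdom : ∀ v : X, ‖S v‖^2 * φ 1 ≤ c * B v v := by
    intro v; rw [hBapply]; exact hone v
  have hBii : ∀ (ι : Type) (_ : Fintype ι) (y : ι → X),
      (∀ fℓ : X →L[ℝ] ℝ, ∑ i, (fℓ (y i))^2 ≤ ‖fℓ‖^2) → ∑ i, B (y i) (y i) ≤ φ 1 := by
    intro ι hι y hy
    have hpt : ∀ g, 0 ≤ ((1 : C((Metric.sphere (0 : X →L[ℝ] ℝ) 1 : Set (X →L[ℝ] ℝ)), ℝ))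
        - ∑ i, evalQ (y i) (y i)) g := by
      intro g
      have h5 := hy (g : X →L[ℝ] ℝ)
      rw [hKnorm g, one_pow] at h5
      simp only [ContinuousMap.sub_apply, ContinuousMap.one_apply, ContinuousMap.sum_apply,
        evalQ_apply, sub_nonneg]
      refine le_trans (le_of_eq (Finset.sum_congr rfl fun i _ => ?_)) h5
      rw [pow_two]
    have h6 := hpos _ hpt
    rw [map_sub, map_sum, sub_nonneg] at h6
    refine le_trans (le_of_eq ?_) h6
    exact Finset.sum_congr rfl fun i _ => hBapply _ _
  -- orthogonal basis for B
  haveI : Invertible (2:ℝ) := invertibleOfNonzero two_ne_zero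
  have hBsymm : B.IsSymm := ⟨fun v w => by
    simpa using hBsymm' v w⟩
  obtain ⟨b, hb⟩ := LinearMap.BilinForm.exists_orthogonal_basis hBsymm
  set d : Fin (Module.finrank ℝ X) → ℝ := fun i => B (b i) (b i) with hd
  have hd0 : ∀ i, 0 ≤ d i := fun i => hBpsd (b i)
  have hrepr : ∀ (z : X) (i), B z (b i) = b.repr z i * d i := by
    intro z i
    conv_lhs => rw [← b.sum_repr z]
    rw [map_sum, LinearMap.sum_apply]
    rw [Finset.sum_eq_single i]
    · rw [map_smul, LinearMap.smul_apply, smul_eq_mul]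
    · intro k _ hk
      rw [map_smul, LinearMap.smul_apply, smul_eq_mul]
      have h7 : B (b k) (b i) = 0 := hb hk
      rw [h7, mul_zero]
    · intro h; exact absurd (Finset.mem_univ i) h
  have htr : (N:ℝ) = ∑ i, b.repr (S (b i)) i := by
    have hterm : ∀ i, b.repr (S (b i)) i = ∑ j, f j (b i) * b.repr (x j) i := by
      intro i
      rw [hS (b i), map_sum, Finsupp.finset_sum_apply]
      refine Finset.sum_congr rfl fun j _ => ?_
      rw [map_smul, Finsupp.smul_apply, smul_eq_mul]
    calc (N:ℝ) = ∑ j, f j (x j) := by simp [hpair]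
      _ = ∑ j, ∑ i, b.repr (x j) i * f j (b i) := by
          refine Finset.sum_congr rfl fun j _ => ?_
          conv_lhs => rw [← b.sum_repr (x j)]
          rw [map_sum]
          refine Finset.sum_congr rfl fun i _ => ?_
          rw [map_smul, smul_eq_mul]
      _ = ∑ i, ∑ j, f j (b i) * b.repr (x j) i := by
          rw [Finset.sum_comm]
          exact Finset.sum_congr rfl fun i _ =>
            Finset.sum_congr rfl fun j _ => mul_comm _ _
      _ = ∑ i, b.repr (S (b i)) i :=
          Finset.sum_congr rfl fun i _ => (hterm i).symm
  have hSzero : ∀ v : X, c * B v v ≤ 0 → S v = 0 := by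
    intro v hv
    have h5 := le_trans (hdom v) hv
    have h7 : ‖S v‖^2 ≤ 0 := by
      by_contra h
      push_neg at h
      nlinarith [mul_pos h hφ1]
    have h8 : ‖S v‖ = 0 := by nlinarith [norm_nonneg (S v), sq_nonneg ‖S v‖]
    exact norm_eq_zero.mp h8
  rcases eq_or_lt_of_le hc0 with hcz | hcpos
  · -- c = 0 : then S = 0 and N = 0
    have hS0 : ∀ v : X, S v = 0 := by
      intro v
      refine hSzero v ?_
      rw [← hcz, zero_mul]
    have hN0 : (N:ℝ) = 0 := by
      rw [htr]
      refine Finset.sum_eq_zero fun i _ => ?_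
      rw [hS0 (b i)]
      simp
    rw [hN0, zero_div]
    exact ht0
  · -- main case
    set P : Finset (Fin (Module.finrank ℝ X)) := Finset.univ.filter (fun i => d i ≠ 0) with hP
    have hdP : ∀ i ∈ P, 0 < d i := fun i hi =>
      lt_of_le_of_ne (hd0 i) (Ne.symm ((Finset.mem_filter.mp hi).2))
    have hSb0 : ∀ i, i ∉ P → S (b i) = 0 := by
      intro i hiP
      have hdz : d i = 0 := by
        by_contra h
        exact hiP (Finset.mem_filter.mpr ⟨Finset.mem_univ i, h⟩)
      refine hSzero (b i) ?_
      have : B (b i) (b i) = d i := rfl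
      rw [this, hdz, mul_zero]
    have htrP : (N:ℝ) = ∑ i ∈ P, B (S (b i)) (b i) / d i := by
      rw [htr]
      rw [← Finset.sum_subset (Finset.subset_univ P)
        (fun i _ hiP => by rw [hSb0 i hiP]; simp)]
      refine Finset.sum_congr rfl fun i hi => ?_
      have h5 := hrepr (S (b i)) i
      rw [eq_div_iff (hdP i hi).ne']
      exact h5.symm
    set gq : Fin (Module.finrank ℝ X) → ℝ := fun i => B (S (b i)) (S (b i)) / d i with hgq
    have hgq0 : ∀ i, 0 ≤ gq i := fun i => div_nonneg (hBpsd _) (hd0 i)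
    have hstep1 : (N:ℝ) ≤ ∑ i ∈ P, Real.sqrt (gq i) := by
      rw [htrP]
      refine Finset.sum_le_sum fun i hi => ?_
      have hcs := psd_cs B hBsymm' hBpsd (S (b i)) (b i)
      have hdpos := hdP i hi
      have h7 : (B (S (b i)) (b i) / d i)^2 ≤ gq i := by
        rw [div_pow, hgq]
        rw [div_le_div_iff₀ (by positivity) hdpos]
        have h71 : B (S (b i)) (S (b i)) * B (b i) (b i) = B (S (b i)) (S (b i)) * d i := rfl
        nlinarith [hcs, hdpos.le, hBpsd (S (b i))]
      calc B (S (b i)) (b i) / d i ≤ |B (S (b i)) (b i) / d i| := le_abs_self _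
        _ = Real.sqrt ((B (S (b i)) (b i) / d i)^2) := (Real.sqrt_sq_eq_abs _).symm
        _ ≤ Real.sqrt (gq i) := Real.sqrt_le_sqrt h7
    set τ := φ 1 / c with hτdef
    have hτ0 : 0 < τ := div_pos hφ1 hcpos
    set e : Fin (Module.finrank ℝ X) → X := fun i => (Real.sqrt (d i))⁻¹ • b i with he
    have hBe : ∀ i ∈ P, ∀ j ∈ P, B (e i) (e j) = if i = j then (1:ℝ) else 0 := by
      intro i hi j hj
      rw [he]
      simp only [map_smul, LinearMap.smul_apply, smul_eq_mul]
      by_cases hij : i = j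
      · subst hij
        rw [if_pos rfl]
        have hsq : Real.sqrt (d i) * Real.sqrt (d i) = d i := Real.mul_self_sqrt (hd0 i)
        have hne : Real.sqrt (d i) ≠ 0 := by
          intro h
          rw [h, zero_mul] at hsq
          exact (hdP i hi).ne' hsq.symm
        show (Real.sqrt (d i))⁻¹ * ((Real.sqrt (d i))⁻¹ * B (b i) (b i)) = 1
        have hBval : B (b i) (b i) = d i := rfl
        rw [hBval, ← hsq]
        field_simp
        rw [Real.sq_sqrt (sq_nonneg _)]
      · rw [if_neg hij]
        have h7 : B (b i) (b j) = 0 := hb hij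
        rw [h7, mul_zero, mul_zero]
    have hBSe : ∀ i ∈ P, B (S (e i)) (S (e i)) = gq i := by
      intro i hi
      rw [he]
      have hmap : S ((Real.sqrt (d i))⁻¹ • b i) = (Real.sqrt (d i))⁻¹ • S (b i) := map_smul S _ _
      rw [hmap]
      simp only [map_smul, LinearMap.smul_apply, smul_eq_mul]
      have hsq : Real.sqrt (d i) * Real.sqrt (d i) = d i := Real.mul_self_sqrt (hd0 i)
      have hne : d i ≠ 0 := (hdP i hi).ne'
      have hne' : Real.sqrt (d i) ≠ 0 := by
        intro h
        rw [h, zero_mul] at hsq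
        exact hne hsq.symm
      show (Real.sqrt (d i))⁻¹ * ((Real.sqrt (d i))⁻¹ * B (S (b i)) (S (b i)))
        = B (S (b i)) (S (b i)) / d i
      rw [← hsq]
      field_simp
      rw [Real.sq_sqrt (sq_nonneg _)]
    set w : {i // i ∈ P} → X := fun i => Real.sqrt τ • S (e i.1) with hw
    have hwadm : ∀ fℓ : X →L[ℝ] ℝ, ∑ i : {i // i ∈ P}, (fℓ (w i))^2 ≤ ‖fℓ‖^2 := by
      intro fℓ
      set a : {i // i ∈ P} → ℝ := fun i => fℓ (S (e i.1)) with ha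
      set W : X := ∑ i : {i // i ∈ P}, a i • e i.1 with hW
      set A : ℝ := ∑ i : {i // i ∈ P}, (a i)^2 with hA
      have hA0 : 0 ≤ A := Finset.sum_nonneg fun i _ => sq_nonneg _
      have hBWz : ∀ z : X, B W z = ∑ i : {i // i ∈ P}, a i * B (e i.1) z := by
        intro z
        rw [hW, map_sum, LinearMap.sum_apply]
        refine Finset.sum_congr rfl fun i _ => ?_
        rw [map_smul, LinearMap.smul_apply, smul_eq_mul]
      have hBWW : B W W = A := by
        rw [hBWz W, hA]
        refine Finset.sum_congr rfl fun i _ => ?_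
        rw [hW, map_sum]
        rw [Finset.sum_eq_single i]
        · rw [map_smul, smul_eq_mul]
          have h7 := hBe i.1 i.2 i.1 i.2
          rw [if_pos rfl] at h7
          rw [h7]
          ring
        · intro k _ hk
          rw [map_smul, smul_eq_mul]
          have h7 := hBe i.1 i.2 k.1 k.2
          rw [if_neg (fun hik => hk (Subtype.ext hik.symm))] at h7
          rw [h7]
          ring
        · intro h; exact absurd (Finset.mem_univ i) h
      have hSW : fℓ (S W) = A := by
        rw [hW, map_sum, map_sum, hA]
        refine Finset.sum_congr rfl fun i _ => ?_
        rw [map_smul, map_smul, smul_eq_mul]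
        rw [pow_two]
      have hq : A^2 ≤ (‖fℓ‖^2 * (c / φ 1)) * A := by
        have h5 : (fℓ (S W))^2 ≤ ‖fℓ‖^2 * ‖S W‖^2 := by
          have h51 := fℓ.le_opNorm (S W)
          have h52 : |fℓ (S W)| ≤ ‖fℓ‖ * ‖S W‖ := by
            rw [← Real.norm_eq_abs]
            exact h51
          nlinarith [abs_nonneg (fℓ (S W)), norm_nonneg (S W), norm_nonneg fℓ,
            sq_abs (fℓ (S W))]
        have h6 : ‖S W‖^2 ≤ (c / φ 1) * B W W := by
          have h61 := hdom W
          rw [div_mul_eq_mul_div, le_div_iff₀ hφ1]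
          linarith
        calc A^2 = (fℓ (S W))^2 := by rw [hSW]
          _ ≤ ‖fℓ‖^2 * ‖S W‖^2 := h5
          _ ≤ ‖fℓ‖^2 * ((c / φ 1) * B W W) := mul_le_mul_of_nonneg_left h6 (sq_nonneg _)
          _ = (‖fℓ‖^2 * (c / φ 1)) * A := by rw [hBWW]; ring
      have hAle : A ≤ ‖fℓ‖^2 * (c / φ 1) := by
        refine quad_le hA0 ?_ hq
        positivity
      have h7 : ∑ i : {i // i ∈ P}, (fℓ (w i))^2 = τ * A := by
        rw [hA, Finset.mul_sum]
        refine Finset.sum_congr rfl fun i _ => ?_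
        rw [hw]
        have h71 : fℓ (Real.sqrt τ • S (e i.1)) = Real.sqrt τ * fℓ (S (e i.1)) := by
          rw [map_smul, smul_eq_mul]
        rw [h71, mul_pow, Real.sq_sqrt hτ0.le, ha]
      rw [h7]
      calc τ * A ≤ τ * (‖fℓ‖^2 * (c / φ 1)) := mul_le_mul_of_nonneg_left hAle hτ0.le
        _ = ‖fℓ‖^2 := by
            rw [hτdef]
            field_simp
    have happ := hBii {i // i ∈ P} inferInstance w hwadm
    have hBw : ∀ i : {i // i ∈ P}, B (w i) (w i) = τ * gq i.1 := by
      intro i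
      rw [hw]
      simp only [map_smul, LinearMap.smul_apply, smul_eq_mul]
      rw [hBSe i.1 i.2, ← mul_assoc, Real.mul_self_sqrt hτ0.le]
    have hsumP : ∑ i ∈ P, gq i ≤ c := by
      have h5 : ∑ i : {i // i ∈ P}, B (w i) (w i) = τ * ∑ i ∈ P, gq i := by
        rw [Finset.sum_congr rfl fun i _ => hBw i, ← Finset.mul_sum]
        congr 1
        exact Finset.sum_coe_sort P gq
      rw [h5] at happ
      have h6 : φ 1 = τ * c := by
        rw [hτdef]
        field_simp
      rw [h6] at happ
      exact le_of_mul_le_mul_left happ hτ0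
    have hcard : (P.card : ℝ) ≤ (Module.finrank ℝ X : ℝ) := by
      have h5 : P.card ≤ Module.finrank ℝ X := by
        simpa using Finset.card_le_univ P
      exact_mod_cast h5
    have hsq : (N:ℝ)^2 ≤ (Module.finrank ℝ X : ℝ) * c := by
      have h5 : (N:ℝ)^2 ≤ (∑ i ∈ P, Real.sqrt (gq i))^2 :=
        pow_le_pow_left₀ (by positivity : (0:ℝ) ≤ (N:ℝ)) hstep1 2
      have h6 : (∑ i ∈ P, Real.sqrt (gq i))^2 ≤ P.card * ∑ i ∈ P, (Real.sqrt (gq i))^2 :=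
        sq_sum_le_card_mul_sum_sq
      have h7 : ∑ i ∈ P, (Real.sqrt (gq i))^2 = ∑ i ∈ P, gq i :=
        Finset.sum_congr rfl fun i _ => Real.sq_sqrt (hgq0 i)
      have h8 : 0 ≤ ∑ i ∈ P, gq i := Finset.sum_nonneg fun i _ => hgq0 i
      calc (N:ℝ)^2 ≤ P.card * ∑ i ∈ P, (Real.sqrt (gq i))^2 := le_trans h5 h6
        _ = P.card * ∑ i ∈ P, gq i := by rw [h7]
        _ ≤ (Module.finrank ℝ X : ℝ) * c := by
            refine mul_le_mul hcard hsumP h8 ?_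
            exact le_of_lt hnR
    have hfin : (N:ℝ) ≤ Real.sqrt (Module.finrank ℝ X : ℝ) * t := by
      have hrt : (Real.sqrt (Module.finrank ℝ X : ℝ) * t)^2 = (Module.finrank ℝ X : ℝ) * c := by
        rw [mul_pow, Real.sq_sqrt (le_of_lt hnR), hcs2]
      have hM0 : 0 ≤ Real.sqrt (Module.finrank ℝ X : ℝ) * t :=
        mul_nonneg (Real.sqrt_nonneg _) ht0
      nlinarith [hsq, hrt, hM0, (Nat.cast_nonneg N : (0:ℝ) ≤ (N:ℝ))]
    rw [div_le_iff₀ (Real.sqrt_pos.mpr hnR)]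
    linarith [hfin]
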